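/- Let $(a_n)_{n \geq -1}$ be a real sequence with $a_{-1} = -1$, and define monic polynomials $S_n^{(1)}$ by the symmetric three-term recurrence $S_{n+1}^{(1)}(x) = x S_n^{(1)}(x) - v_n^{(1)} S_{n-1}^{(1)}(x)$ with $v_n^{(1)} = \frac{1}{4}(1 + a_{n-1})(1 - a_{n-2})$, $S_0^{(1)} = 1$, $S_{-1}^{(1)} = 0$. Then for all $n \geq 0$, $S_{n+1}^{(1)}(-1) = \frac{1}{2}(a_{n-1} - 1)\, S_n^{(1)}(-1)$. -/
import Mathlib


/-- For the symmetric recurrence `S_{n+1} = x S_n - v_n S_{n-1}` with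
`v_n = ¼(1 + a_{n-1})(1 - a_{n-2})`, `a_{-1} = -1`, `S_0 = 1`, `S_1 = x`
(coming from `S_{-1} = 0`), one has `S_{n+1}(-1) = ½(a_{n-1} - 1) S_n(-1)`. -/
theorem stmt_9 (a : ℤ → ℝ) (ha : a (-1) = -1) (S : ℕ → Polynomial ℝ)
    (hS0 : S 0 = 1) (hS1 : S 1 = Polynomial.X)
    (hrec : ∀ n : ℕ, 1 ≤ n → S (n + 1) = Polynomial.X * S n -
      Polynomial.C ((1 + a ((n : ℤ) - 1)) * (1 - a ((n : ℤ) - 2)) / 4) * S (n - 1)) :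
    ∀ n : ℕ, (S (n + 1)).eval (-1) = (a ((n : ℤ) - 1) - 1) / 2 * (S n).eval (-1) := by
  intro n
  induction n with
  | zero =>
      simp [hS0, hS1, ha]
      norm_num
  | succ n ih =>
      have h := hrec (n + 1) (Nat.le_add_left 1 n)
      have e1 : ((n + 1 : ℕ) : ℤ) - 1 = (n : ℤ) := by push_cast; ring
      have e2 : ((n + 1 : ℕ) : ℤ) - 2 = (n : ℤ) - 1 := by push_cast; ring
      rw [e1, e2] at h
      have h' : (S (n + 1 + 1)).eval (-1) =
          -(S (n + 1)).eval (-1) -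
            (1 + a n) * (1 - a ((n : ℤ) - 1)) / 4 * (S n).eval (-1) := by
        simp [h]
      rw [h', e1, ih]
      ring
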